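/- Let N ≥ 2. The testing design consisting of the two tests (0, 1, …, N−1) and (N−1, N−2, …, 0), listing all items of Fin N in increasing and in decreasing order respectively, is feasible for (N, 2); consequently T(N, 2) = 2. -/

import Mathlib

/-- The outcome of a cascaded test `t` (a list of items) on a defective set `S`:
the first element of `t` belonging to `S`, or `none` if there is none. -/
def outcome {N : ℕ} (t : List (Fin N)) (S : Finset (Fin N)) : Option (Fin N) :=
  (t.filter (fun x => x ∈ S)).head?

/-- A testing design `𝒯` (an indexed family of tests) is feasible for `(N, K)` if the
map sending each `S ⊆ Fin N` with `|S| ≤ K` to its vector of test outcomes is injective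
on `{S | |S| ≤ K}`. -/
def Feasible (N K : ℕ) {T : ℕ} (𝒯 : Fin T → List (Fin N)) : Prop :=
  Set.InjOn (fun (S : Finset (Fin N)) => fun i : Fin T => outcome (𝒯 i) S)
    {S : Finset (Fin N) | S.card ≤ K}

/-- `TNK N K`: the minimum number of tests over all duplicate-free testing designs
feasible for `(N, K)`. -/
noncomputable def TNK (N K : ℕ) : ℕ :=
  sInf {T : ℕ | ∃ 𝒯 : Fin T → List (Fin N), (∀ i, (𝒯 i).Nodup) ∧ Feasible N K 𝒯}

/-- `fT 𝒯 S v`: the number of tests in the design `𝒯` whose outcome on `S` is `some v`. -/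
def fT {N T : ℕ} (𝒯 : Fin T → List (Fin N)) (S : Finset (Fin N)) (v : Fin N) : ℕ :=
  (Finset.univ.filter (fun i : Fin T => outcome (𝒯 i) S = some v)).card

/-- A design is in systematic form if every test is nonempty and the first element of
each test does not occur in any other test. -/
def Systematic {N T : ℕ} (𝒯 : Fin T → List (Fin N)) : Prop :=
  ∀ i : Fin T, 𝒯 i ≠ [] ∧ ∀ u : Fin N, (𝒯 i).head? = some u → ∀ j : Fin T, j ≠ i → u ∉ 𝒯 j

lemma head_filter_rel {α} {r : α → α → Prop} {l : List α} (hl : l.Pairwise r)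
    {p : α → Bool} {v : α} (h : (l.filter p).head? = some v) :
    v ∈ l ∧ p v ∧ ∀ w ∈ l, p w → v = w ∨ r v w := by
  have hp : (l.filter p).Pairwise r := hl.filter p
  rcases hf : l.filter p with _ | ⟨a, rest⟩
  · rw [hf] at h; simp at h
  · rw [hf] at h
    simp only [List.head?_cons, Option.some_inj] at h
    have hv : a ∈ l.filter p := by rw [hf]; exact List.mem_cons_self
    rw [List.mem_filter] at hv
    subst h
    refine ⟨hv.1, hv.2, fun w hw hpw => ?_⟩
    have : w ∈ l.filter p := List.mem_filter.2 ⟨hw, hpw⟩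
    rw [hf] at this
    rcases List.mem_cons.1 this with h' | h'
    · exact Or.inl h'.symm
    · rw [hf] at hp
      exact Or.inr ((List.pairwise_cons.1 hp).1 w h')

lemma outcome_none_iff {N : ℕ} {t : List (Fin N)} {S : Finset (Fin N)} :
    outcome t S = none ↔ ∀ x ∈ t, x ∉ S := by
  unfold outcome
  rw [List.head?_eq_none_iff, List.filter_eq_nil_iff]
  simp

lemma outcome_finRange_none {N : ℕ} {S : Finset (Fin N)}
    (h : outcome (List.finRange N) S = none) : S = ∅ := by
  rw [outcome_none_iff] at h
  ext x
  simp only [Finset.notMem_empty, iff_false]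
  exact h x (List.mem_finRange x)

lemma outcome_rev_none {N : ℕ} {S : Finset (Fin N)}
    (h : outcome (List.finRange N).reverse S = none) : S = ∅ := by
  rw [outcome_none_iff] at h
  ext x
  simp only [Finset.notMem_empty, iff_false]
  exact h x (by simp [List.mem_reverse])

lemma outcome_min {N : ℕ} {S : Finset (Fin N)} {v : Fin N}
    (h : outcome (List.finRange N) S = some v) : v ∈ S ∧ ∀ w ∈ S, v ≤ w := by
  have := head_filter_rel (List.pairwise_lt_finRange N) h
  refine ⟨by simpa using this.2.1, fun w hw => ?_⟩
  rcases this.2.2 w (List.mem_finRange w) (by simpa using hw) with h' | h'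
  · exact le_of_eq h'
  · exact le_of_lt h'

lemma outcome_max {N : ℕ} {S : Finset (Fin N)} {v : Fin N}
    (h : outcome (List.finRange N).reverse S = some v) : v ∈ S ∧ ∀ w ∈ S, w ≤ v := by
  have hpair : (List.finRange N).reverse.Pairwise (fun a b => b < a) :=
    List.pairwise_reverse.2 (List.pairwise_lt_finRange N)
  have := head_filter_rel hpair h
  refine ⟨by simpa using this.2.1, fun w hw => ?_⟩
  rcases this.2.2 w (by simp [List.mem_reverse]) (by simpa using hw) with h' | h'
  · exact le_of_eq h'.symm
  · exact le_of_lt h'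

lemma eq_pair {N : ℕ} {S : Finset (Fin N)} {a b : Fin N} (hcard : S.card ≤ 2)
    (ha : a ∈ S) (hb : b ∈ S) (hmin : ∀ x ∈ S, a ≤ x) (hmax : ∀ x ∈ S, x ≤ b) :
    S = insert a {b} := by
  apply Finset.Subset.antisymm
  · intro x hx
    simp only [Finset.mem_insert, Finset.mem_singleton]
    by_contra hc
    push_neg at hc
    rcases eq_or_ne a b with rfl | hab
    · exact hc.1 (le_antisymm (hmax x hx) (hmin x hx))
    · have hsub : insert x (insert a {b}) ⊆ S := by
        intro y hy
        simp only [Finset.mem_insert, Finset.mem_singleton] at hy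
        rcases hy with rfl | rfl | rfl <;> assumption
      have : 3 ≤ S.card := by
        calc 3 = (insert x (insert a ({b} : Finset (Fin N)))).card := by
                rw [Finset.card_insert_of_notMem (by simp [hc.1, hc.2]),
                    Finset.card_insert_of_notMem (by simp [hab])]
                simp
          _ ≤ S.card := Finset.card_le_card hsub
      omega
  · intro y hy
    simp only [Finset.mem_insert, Finset.mem_singleton] at hy
    rcases hy with rfl | rfl <;> assumption

theorem feas (N : ℕ) : Feasible N 2 (![List.finRange N, (List.finRange N).reverse]) := by
  intro S1 hS1 S2 hS2 h
  have h0 := congrFun h 0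
  have h1 := congrFun h 1
  simp only [Matrix.cons_val_zero, Matrix.cons_val_one, Matrix.head_cons] at h0 h1
  rcases ho : outcome (List.finRange N) S1 with _ | a
  · rw [ho] at h0
    rw [outcome_finRange_none ho, outcome_finRange_none h0.symm]
  · rw [ho] at h0
    rcases ho' : outcome (List.finRange N).reverse S1 with _ | b
    · rw [outcome_rev_none ho'] at ho
      rw [outcome_none_iff.2 (by simp)] at ho
      exact absurd ho (by simp)
    · rw [ho'] at h1
      obtain ⟨ha1, hmin1⟩ := outcome_min ho
      obtain ⟨hb1, hmax1⟩ := outcome_max ho'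
      obtain ⟨ha2, hmin2⟩ := outcome_min h0.symm
      obtain ⟨hb2, hmax2⟩ := outcome_max h1.symm
      rw [eq_pair hS1 ha1 hb1 hmin1 hmax1, eq_pair hS2 ha2 hb2 hmin2 hmax2]

theorem stmt11 (N : ℕ) (hN : 2 ≤ N) :
    Feasible N 2 (![List.finRange N, (List.finRange N).reverse]) ∧ TNK N 2 = 2 := by
  refine ⟨feas N, ?_⟩
  have h2 : 2 ∈ {T : ℕ | ∃ 𝒯 : Fin T → List (Fin N), (∀ i, (𝒯 i).Nodup) ∧ Feasible N 2 𝒯} := by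
    refine ⟨![List.finRange N, (List.finRange N).reverse], fun i => ?_, feas N⟩
    fin_cases i
    · exact List.nodup_finRange N
    · exact List.nodup_reverse.2 (List.nodup_finRange N)
  refine le_antisymm (Nat.sInf_le h2) (le_csInf ⟨2, h2⟩ ?_)
  rintro T ⟨𝒯, hnd, hfeas⟩
  by_contra hT
  push_neg at hT
  have x0 : Fin N := ⟨0, by omega⟩
  interval_cases T
  · -- T = 0
    have hmem1 : (∅ : Finset (Fin N)) ∈ {S : Finset (Fin N) | S.card ≤ 2} := by simp
    have hmem2 : ({x0} : Finset (Fin N)) ∈ {S : Finset (Fin N) | S.card ≤ 2} := by simp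
    have := hfeas hmem1 hmem2 (funext fun i => i.elim0)
    exact (Finset.singleton_ne_empty x0) this.symm
  · -- T = 1
    have hnd0 := hnd 0
    by_cases hall : ∀ z : Fin N, z ∈ 𝒯 0
    · have h01 : (⟨0, by omega⟩ : Fin N) ∈ 𝒯 0 := hall _
      have h11 : (⟨1, by omega⟩ : Fin N) ∈ 𝒯 0 := hall _
      rcases htt : 𝒯 0 with _ | ⟨x, _ | ⟨y, rest⟩⟩
      · rw [htt] at h01; simp at h01
      · rw [htt] at h01 h11
        simp at h01 h11
        rw [← h11] at h01
        exact absurd h01 (by simp [Fin.ext_iff])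
      · have hxy : x ≠ y := by
          rw [htt] at hnd0
          simp at hnd0
          exact fun hc => hnd0.1.1 (hc ▸ rfl)
        have o1 : outcome (𝒯 0) {x} = some x := by
          rw [htt]; unfold outcome; simp
        have o2 : outcome (𝒯 0) ({x, y} : Finset (Fin N)) = some x := by
          rw [htt]; unfold outcome; simp
        have hmem1 : ({x} : Finset (Fin N)) ∈ {S : Finset (Fin N) | S.card ≤ 2} := by simp
        have hmem2 : ({x, y} : Finset (Fin N)) ∈ {S : Finset (Fin N) | S.card ≤ 2} := by
          simp only [Set.mem_setOf_eq]
          exact le_trans (Finset.card_insert_le _ _) (by simp)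
        have heq := hfeas hmem1 hmem2
          (funext fun i => by
            have hi : i = 0 := Subsingleton.elim _ _
            subst hi
            simpa using o1.trans o2.symm)
        have hy : y ∈ ({x} : Finset (Fin N)) := heq ▸ (by simp : y ∈ ({x, y} : Finset (Fin N)))
        simp at hy
        exact hxy hy.symm
    · push_neg at hall
      obtain ⟨z, hz⟩ := hall
      have o1 : outcome (𝒯 0) ∅ = none := outcome_none_iff.2 (by simp)
      have o2 : outcome (𝒯 0) {z} = none := outcome_none_iff.2 (by
        intro x hx
        simp only [Finset.mem_singleton]
        exact fun hc => hz (hc ▸ hx))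
      have hmem1 : (∅ : Finset (Fin N)) ∈ {S : Finset (Fin N) | S.card ≤ 2} := by simp
      have hmem2 : ({z} : Finset (Fin N)) ∈ {S : Finset (Fin N) | S.card ≤ 2} := by simp
      have := hfeas hmem1 hmem2
        (funext fun i => by
          have hi : i = 0 := Subsingleton.elim _ _
          subst hi
          simpa using o1.trans o2.symm)
      exact (Finset.singleton_ne_empty z) this.symm
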